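/- Let A_s ≥ A_w > 0 and P_t > 0. Then the maximum over P_s ∈ [0, P_t] of min{ P_s·A_s , (P_t − P_s)·A_w / (P_s·A_w + 1) } equals γ* = ( √((A_s + A_w)² + 4·P_t·A_s·A_w²) − (A_s + A_w) ) / (2·A_w), and it is attained at P_s* = ( √((A_s + A_w)² + 4·P_t·A_s·A_w²) − (A_s + A_w) ) / (2·A_s·A_w). -/

import Mathlib

/-- Two-group NOMA max-min: the maximum over `p ∈ [0, Pt]` of
`min (p·As, (Pt−p)·Aw/(p·Aw+1))` equals the closed-form `γ`, and it is
attained at the closed-form power split `Ps`. -/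
theorem noma_two_group_mmf_isGreatest
    (As Aw Pt : ℝ) (hw : 0 < Aw) (hsw : Aw ≤ As) (hPt : 0 < Pt)
    (γ Ps : ℝ)
    (hγ : γ = (Real.sqrt ((As + Aw) ^ 2 + 4 * Pt * As * Aw ^ 2) - (As + Aw))
        / (2 * Aw))
    (hPs : Ps = (Real.sqrt ((As + Aw) ^ 2 + 4 * Pt * As * Aw ^ 2) - (As + Aw))
        / (2 * As * Aw)) :
    IsGreatest {m : ℝ | ∃ p ∈ Set.Icc (0 : ℝ) Pt,
        m = min (p * As) ((Pt - p) * Aw / (p * Aw + 1))} γ ∧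
    min (Ps * As) ((Pt - Ps) * Aw / (Ps * Aw + 1)) = γ := by
  have hAs : 0 < As := lt_of_lt_of_le hw hsw
  set S := Real.sqrt ((As + Aw) ^ 2 + 4 * Pt * As * Aw ^ 2) with hSdef
  have hnn : (0:ℝ) ≤ (As + Aw) ^ 2 + 4 * Pt * As * Aw ^ 2 := by positivity
  have hS2 : S ^ 2 = (As + Aw) ^ 2 + 4 * Pt * As * Aw ^ 2 := Real.sq_sqrt hnn
  have hSge : As + Aw ≤ S := by
    have h1 : Real.sqrt ((As + Aw) ^ 2) ≤ S := Real.sqrt_le_sqrt (by nlinarith [mul_pos (mul_pos hPt hAs) (pow_pos hw 2)])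
    rwa [Real.sqrt_sq (by positivity)] at h1
  have hPs0 : 0 ≤ Ps := by
    rw [hPs]; apply div_nonneg (by linarith) (by positivity)
  have hγ0 : 0 ≤ γ := by
    rw [hγ]; apply div_nonneg (by linarith) (by positivity)
  -- key quadratic identity
  have hkey : As * Aw * Ps ^ 2 + (As + Aw) * Ps - Pt * Aw = 0 := by
    rw [hPs]; field_simp; nlinarith [hS2]
  have hγPs : γ = As * Ps := by
    rw [hγ, hPs]; field_simp
  have hden : 0 < Ps * Aw + 1 := by positivity
  have hfPs : (Pt - Ps) * Aw / (Ps * Aw + 1) = γ := by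
    rw [div_eq_iff (ne_of_gt hden), hγPs]; nlinarith [hkey]
  have hPsPt : Ps ≤ Pt := by nlinarith [hkey, mul_nonneg (mul_nonneg hAs.le hw.le) (sq_nonneg Ps)]
  have hminPs : min (Ps * As) ((Pt - Ps) * Aw / (Ps * Aw + 1)) = γ := by
    rw [hfPs, hγPs, mul_comm]; exact min_self _
  refine ⟨⟨⟨Ps, ⟨hPs0, hPsPt⟩, hminPs.symm⟩, ?_⟩, hminPs⟩
  rintro m ⟨p, ⟨hp0, hpPt⟩, rfl⟩
  rcases le_total p Ps with h | h
  · calc min (p * As) ((Pt - p) * Aw / (p * Aw + 1)) ≤ p * As := min_le_left _ _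
      _ ≤ Ps * As := mul_le_mul_of_nonneg_right h hAs.le
      _ = γ := (hγPs.trans (mul_comm _ _)).symm
  · have hdp : 0 < p * Aw + 1 := by positivity
    calc min (p * As) ((Pt - p) * Aw / (p * Aw + 1))
        ≤ (Pt - p) * Aw / (p * Aw + 1) := min_le_right _ _
      _ ≤ γ := by
          rw [div_le_iff₀ hdp]
          have := hfPs
          rw [div_eq_iff (ne_of_gt hden)] at this
          nlinarith [mul_nonneg hγ0 (mul_nonneg (sub_nonneg.mpr h) hw.le)]
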